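/- Let μ > 0 be a constant and let Ω ⊆ ℝ² be a bounded domain with diam(Ω) < 1/μ, and let φ ∈ C⁰(∂Ω). Then there is a constant C₁, depending only on Ω and φ, such that every solution u ∈ C²(Ω) ∩ C⁰(closure Ω) of div(Du/√(1+|Du|²)) = 1/√(1+|Du|²) + μ in Ω with u = φ on ∂Ω satisfies C₁ ≤ u ≤ max_{∂Ω} φ in Ω. -/

import Mathlib

open Real Set Filter Topology

/-- First partial derivative of `u` with respect to `x`. -/
noncomputable def pdx (u : ℝ × ℝ → ℝ) (p : ℝ × ℝ) : ℝ := fderiv ℝ u p ((1, 0) : ℝ × ℝ)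

/-- First partial derivative of `u` with respect to `y`. -/
noncomputable def pdy (u : ℝ × ℝ → ℝ) (p : ℝ × ℝ) : ℝ := fderiv ℝ u p ((0, 1) : ℝ × ℝ)

/-- `|Du|²`, the squared norm of the gradient of `u`. -/
noncomputable def gradSq (u : ℝ × ℝ → ℝ) (p : ℝ × ℝ) : ℝ := (pdx u p) ^ 2 + (pdy u p) ^ 2

/-- `√(1+|Du|²)`. -/
noncomputable def Wg (u : ℝ × ℝ → ℝ) (p : ℝ × ℝ) : ℝ := Real.sqrt (1 + gradSq u p)

/-- `div (Du / √(1+|Du|²))`. -/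
noncomputable def divW (u : ℝ × ℝ → ℝ) (p : ℝ × ℝ) : ℝ :=
  pdx (fun q => pdx u q / Wg u q) p + pdy (fun q => pdy u q / Wg u q) p

lemma gradSq_nonneg (u : ℝ × ℝ → ℝ) (p : ℝ × ℝ) : 0 ≤ gradSq u p := by
  unfold gradSq; positivity

lemma Wg_pos (u : ℝ × ℝ → ℝ) (p : ℝ × ℝ) : 0 < Wg u p := by
  unfold Wg
  apply Real.sqrt_pos.mpr
  nlinarith [gradSq_nonneg u p]

lemma Wg_sq (u : ℝ × ℝ → ℝ) (p : ℝ × ℝ) : (Wg u p)^2 = 1 + gradSq u p := by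
  unfold Wg
  rw [Real.sq_sqrt]
  nlinarith [gradSq_nonneg u p]

lemma one_le_Wg (u : ℝ × ℝ → ℝ) (p : ℝ × ℝ) : 1 ≤ Wg u p := by
  nlinarith [Wg_pos u p, Wg_sq u p, gradSq_nonneg u p]

lemma snd_symm {u : ℝ × ℝ → ℝ} {p : ℝ × ℝ} (hu : ContDiffAt ℝ 2 u p) :
    ∀ a b, fderiv ℝ (fderiv ℝ u) p a b = fderiv ℝ (fderiv ℝ u) p b a := by
  have hev : ∀ᶠ q in 𝓝 p, HasFDerivAt u (fderiv ℝ u q) q := by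
    filter_upwards [hu.eventually (by norm_num)] with q hq
    exact (hq.differentiableAt two_ne_zero).hasFDerivAt
  have hDf : HasFDerivAt (fderiv ℝ u) (fderiv ℝ (fderiv ℝ u) p) p :=
    ((hu.fderiv_right (m := 1) (by norm_num)).differentiableAt one_ne_zero).hasFDerivAt
  exact second_derivative_symmetric_of_eventually hev hDf

set_option maxHeartbeats 2000000 in
lemma divW_eq {u : ℝ × ℝ → ℝ} {p : ℝ × ℝ} (hu : ContDiffAt ℝ 2 u p) :
    divW u p = ((1 + (pdy u p)^2) * fderiv ℝ (fderiv ℝ u) p (1,0) (1,0)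
      - 2 * pdx u p * pdy u p * fderiv ℝ (fderiv ℝ u) p (1,0) (0,1)
      + (1 + (pdx u p)^2) * fderiv ℝ (fderiv ℝ u) p (0,1) (0,1)) / (Wg u p)^3 := by
  have hsym := snd_symm hu
  set e1 : ℝ × ℝ := (1,0) with he1
  set e2 : ℝ × ℝ := (0,1) with he2
  set H := fderiv ℝ (fderiv ℝ u) p with hH
  have hDf : HasFDerivAt (fderiv ℝ u) H p :=
    ((hu.fderiv_right (m := 1) (by norm_num)).differentiableAt one_ne_zero).hasFDerivAt
  have hA : HasFDerivAt (pdx u) ((ContinuousLinearMap.apply ℝ ℝ e1).comp H) p :=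
    (ContinuousLinearMap.apply ℝ ℝ e1).hasFDerivAt.comp p hDf
  have hB : HasFDerivAt (pdy u) ((ContinuousLinearMap.apply ℝ ℝ e2).comp H) p :=
    (ContinuousLinearMap.apply ℝ ℝ e2).hasFDerivAt.comp p hDf
  set CA := (ContinuousLinearMap.apply ℝ ℝ e1).comp H with hCA
  set CB := (ContinuousLinearMap.apply ℝ ℝ e2).comp H with hCB
  set CI := (pdx u p • CA + pdx u p • CA) + (pdy u p • CB + pdy u p • CB) with hCI
  have hinner : HasFDerivAt (fun q => 1 + gradSq u q) CI p := by
    have := ((hA.mul hA).add (hB.mul hB)).const_add (1:ℝ)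
    simpa [gradSq, hCI, pow_two] using this
  have hWne : (1 + gradSq u p) ≠ 0 := by nlinarith [gradSq_nonneg u p]
  set W' := ((1:ℝ) / (2 * Real.sqrt (1 + gradSq u p))) • CI with hW'
  have hW : HasFDerivAt (Wg u) W' p := by
    have := hinner.sqrt hWne
    have e : Wg u = fun q => Real.sqrt (1 + gradSq u q) := rfl
    rw [e]
    simpa [hW'] using this
  have hWpne : Wg u p ≠ 0 := ne_of_gt (Wg_pos u p)
  set Winv' := (-((Wg u p) ^ 2)⁻¹) • W' with hWinv'
  have hWinv : HasFDerivAt (fun q => (Wg u q)⁻¹) Winv' p :=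
    (hasDerivAt_inv hWpne).comp_hasFDerivAt p hW
  have hq1 : HasFDerivAt (fun q => pdx u q / Wg u q)
      (pdx u p • Winv' + (Wg u p)⁻¹ • CA) p := by
    have := hA.mul hWinv
    simpa [div_eq_mul_inv, Pi.mul_def] using this
  have hq2 : HasFDerivAt (fun q => pdy u q / Wg u q)
      (pdy u p • Winv' + (Wg u p)⁻¹ • CB) p := by
    have := hB.mul hWinv
    simpa [div_eq_mul_inv, Pi.mul_def] using this
  have hd1 : pdx (fun q => pdx u q / Wg u q) p = (pdx u p • Winv' + (Wg u p)⁻¹ • CA) e1 := by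
    show fderiv ℝ (fun q => pdx u q / Wg u q) p (1,0) = _
    rw [hq1.fderiv]
  have hd2 : pdy (fun q => pdy u q / Wg u q) p = (pdy u p • Winv' + (Wg u p)⁻¹ • CB) e2 := by
    show fderiv ℝ (fun q => pdy u q / Wg u q) p (0,1) = _
    rw [hq2.fderiv]
  have hval : ∀ w : ℝ × ℝ, W' w = (1 / (2 * Wg u p)) *
      (2 * pdx u p * (H w e1) + 2 * pdy u p * (H w e2)) := by
    intro w
    simp [hW', hCI, hCA, hCB, Wg]
    ring
  set a := pdx u p
  set b := pdy u p
  set Wp := Wg u p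
  set h11 := H e1 e1
  set h12 := H e1 e2
  set h21 := H e2 e1
  set h22 := H e2 e2
  have hsym12 : h21 = h12 := hsym e2 e1
  have hW2 : Wp^2 = 1 + (a^2 + b^2) := by
    have := Wg_sq u p
    simpa [gradSq] using this
  have hWpos : 0 < Wp := Wg_pos u p
  have vInv : ∀ w : ℝ × ℝ, Winv' w = (-(Wp^2)⁻¹) * W' w := by
    intro w
    rw [hWinv']
    simp
  have hfinal : divW u p =
      (a * ((-(Wp ^ 2)⁻¹) * ((1 / (2 * Wp)) * (2*a*h11 + 2*b*h12))) + Wp⁻¹ * h11)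
      + (b * ((-(Wp ^ 2)⁻¹) * ((1 / (2 * Wp)) * (2*a*h21 + 2*b*h22))) + Wp⁻¹ * h22) := by
    unfold divW
    rw [hd1, hd2]
    simp only [ContinuousLinearMap.add_apply, ContinuousLinearMap.coe_smul', Pi.smul_apply,
      smul_eq_mul]
    rw [vInv, vInv, hval, hval]
    have vA : CA e1 = h11 := rfl
    have vB : CB e2 = h22 := rfl
    rw [vA, vB]
  have hre : ∀ (a b W h11 h12 h22 : ℝ), W ≠ 0 →
      (a * ((-(W^2)⁻¹) * ((1/(2*W)) * (2*a*h11+2*b*h12))) + W⁻¹*h11)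
      + (b * ((-(W^2)⁻¹) * ((1/(2*W)) * (2*a*h12+2*b*h22))) + W⁻¹*h22)
      = ((W^2)*(h11+h22) - (a^2*h11 + 2*a*b*h12 + b^2*h22))/W^3 := by
    intro a b W h11 h12 h22 hW
    field_simp
    ring
  rw [hfinal, hsym12, hre a b Wp h11 h12 h22 hWpne, hW2]
  congr 1
  ring


lemma snd_deriv_nonneg_of_isLocalMin {f : ℝ × ℝ → ℝ} {p : ℝ × ℝ}
    (hf : ContDiffAt ℝ 2 f p) (hmin : IsLocalMin f p) (e : ℝ × ℝ) :
    0 ≤ fderiv ℝ (fderiv ℝ f) p e e := by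
  by_contra hc
  push_neg at hc
  set H := fderiv ℝ (fderiv ℝ f) p with hH
  set c := H e e with hcdef
  set γ : ℝ → ℝ × ℝ := fun t => p + t • e with hγ
  have hγ0 : γ 0 = p := by simp [hγ]
  have hγd : ∀ t : ℝ, HasDerivAt γ e t := fun t => by
    simpa [hγ] using ((hasDerivAt_id t).smul_const e).const_add p
  have hγc : Continuous γ := by fun_prop
  have hγt : Tendsto γ (𝓝 0) (𝓝 p) := by
    rw [← hγ0]; exact hγc.continuousAt
  have hev : ∀ᶠ q in 𝓝 p, DifferentiableAt ℝ f q := by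
    filter_upwards [hf.eventually (by norm_num)] with q hq
    exact hq.differentiableAt two_ne_zero
  set g : ℝ → ℝ := fun t => f (γ t) with hg
  set φD : ℝ → ℝ := fun t => fderiv ℝ f (γ t) e with hφD
  have hgt : ∀ᶠ t in 𝓝 (0:ℝ), HasDerivAt g (φD t) t := by
    filter_upwards [hγt.eventually hev] with t ht
    exact ht.hasFDerivAt.comp_hasDerivAt t (hγd t)
  have hDf : HasFDerivAt (fderiv ℝ f) H p :=
    ((hf.fderiv_right (m := 1) (by norm_num)).differentiableAt one_ne_zero).hasFDerivAt
  have hφD' : HasDerivAt φD c 0 := by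
    have h1 : HasDerivAt (fun t => fderiv ℝ f (γ t)) (H e) 0 :=
      hDf.comp_hasDerivAt_of_eq 0 (hγd 0) hγ0.symm
    have h2 := (ContinuousLinearMap.apply ℝ ℝ e).hasFDerivAt.comp_hasDerivAt 0 h1
    simpa [Function.comp_def, hφD] using h2
  have hφD0 : φD 0 = 0 := by
    rw [hφD]; simp only [hγ0]
    rw [hmin.fderiv_eq_zero]
    simp
  -- slope of φD tends to c < 0
  have hslope := hasDerivAt_iff_tendsto_slope.mp hφD'
  have hneg : ∀ᶠ t in 𝓝[≠] (0:ℝ), slope φD 0 t < 0 := hslope.eventually_lt_const hc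
  have hneg' : ∀ᶠ t in 𝓝 (0:ℝ), 0 < t → φD t < 0 := by
    rw [eventually_nhdsWithin_iff] at hneg
    filter_upwards [hneg] with t ht hlt
    have := ht (by simpa using ne_of_gt hlt)
    rw [slope_def_field] at this
    have h2 : (φD t - φD 0) / (t - 0) < 0 := by
      simpa [div_eq_inv_mul] using this
    rw [hφD0, sub_zero, sub_zero] at h2
    exact (div_neg_iff.mp h2).resolve_left (fun h => absurd hlt (not_lt.mpr h.2.le)) |>.1
  have h3 : ∀ᶠ t in 𝓝 (0:ℝ), g 0 ≤ g t := by
    have h := hγt.eventually hmin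
    simpa [hg, hγ0] using h
  have hall : ∀ᶠ t in 𝓝 (0:ℝ), (HasDerivAt g (φD t) t ∧ g 0 ≤ g t) ∧ (0 < t → φD t < 0) :=
    (hgt.and h3).and hneg'
  rw [Metric.eventually_nhds_iff] at hall
  obtain ⟨ε, hε, hP⟩ := hall
  set t₀ := ε / 2 with ht₀
  have ht₀pos : 0 < t₀ := by positivity
  have hPt : ∀ t ∈ Icc (0:ℝ) t₀, (HasDerivAt g (φD t) t ∧ g 0 ≤ g t) ∧ (0 < t → φD t < 0) := by
    intro t ht
    apply hP
    rw [Real.dist_eq, sub_zero, abs_of_nonneg ht.1]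
    calc t ≤ ε/2 := ht.2
    _ < ε := by linarith
  have hcont : ContinuousOn g (Icc 0 t₀) := fun t ht =>
    ((hPt t ht).1.1.continuousAt).continuousWithinAt
  have hanti : StrictAntiOn g (Icc 0 t₀) := by
    apply strictAntiOn_of_deriv_neg (convex_Icc 0 t₀) hcont
    intro t ht
    rw [interior_Icc] at ht
    rw [(hPt t ⟨ht.1.le, ht.2.le⟩).1.1.deriv]
    exact (hPt t ⟨ht.1.le, ht.2.le⟩).2 ht.1
  have h4 : g t₀ < g 0 := hanti (left_mem_Icc.mpr ht₀pos.le) (right_mem_Icc.mpr ht₀pos.le) ht₀pos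
  have h5 : g 0 ≤ g t₀ := (hPt t₀ (right_mem_Icc.mpr ht₀pos.le)).1.2
  linarith

lemma snd_deriv_nonpos_of_isLocalMax {f : ℝ × ℝ → ℝ} {p : ℝ × ℝ}
    (hf : ContDiffAt ℝ 2 f p) (hmax : IsLocalMax f p) (e : ℝ × ℝ) :
    fderiv ℝ (fderiv ℝ f) p e e ≤ 0 := by
  have h := snd_deriv_nonneg_of_isLocalMin hf.neg hmax.neg e
  have h1 : fderiv ℝ (fun x => -f x) = fun q => -(fderiv ℝ f q) := funext fun q => fderiv_neg
  rw [h1] at h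
  have h2 : fderiv ℝ (fun q => -(fderiv ℝ f q)) p = -(fderiv ℝ (fderiv ℝ f) p) := fderiv_neg
  rw [h2] at h
  simpa using h

noncomputable def bar (β a b : ℝ) (q : ℝ × ℝ) : ℝ := β * ((q.1 - a)^2 + (q.2 - b)^2)

noncomputable def barD (β a b : ℝ) (q : ℝ × ℝ) : (ℝ × ℝ) →L[ℝ] ℝ :=
  (2*β*(q.1-a)) • ContinuousLinearMap.fst ℝ ℝ ℝ + (2*β*(q.2-b)) • ContinuousLinearMap.snd ℝ ℝ ℝ

noncomputable def barH (β : ℝ) : (ℝ × ℝ) →L[ℝ] (ℝ × ℝ) →L[ℝ] ℝ :=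
  (((2*β) • ContinuousLinearMap.fst ℝ ℝ ℝ).smulRight (ContinuousLinearMap.fst ℝ ℝ ℝ)) +
  (((2*β) • ContinuousLinearMap.snd ℝ ℝ ℝ).smulRight (ContinuousLinearMap.snd ℝ ℝ ℝ))

lemma bar_contDiff (β a b : ℝ) : ContDiff ℝ 2 (bar β a b) := by
  unfold bar
  fun_prop

lemma bar_hasFDeriv (β a b : ℝ) (q : ℝ × ℝ) : HasFDerivAt (bar β a b) (barD β a b q) q := by
  have h1 : HasFDerivAt (fun p : ℝ × ℝ => p.1 - a)
      (ContinuousLinearMap.fst ℝ ℝ ℝ) q := hasFDerivAt_fst.sub_const a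
  have h2 : HasFDerivAt (fun p : ℝ × ℝ => p.2 - b)
      (ContinuousLinearMap.snd ℝ ℝ ℝ) q := hasFDerivAt_snd.sub_const b
  have h3 := ((h1.mul h1).add (h2.mul h2)).const_mul β
  have he : HasFDerivAt (bar β a b)
      (β • ((q.1 - a) • ContinuousLinearMap.fst ℝ ℝ ℝ + (q.1 - a) • ContinuousLinearMap.fst ℝ ℝ ℝ
        + ((q.2 - b) • ContinuousLinearMap.snd ℝ ℝ ℝ + (q.2 - b) • ContinuousLinearMap.snd ℝ ℝ ℝ))) q := by
    have hb : bar β a b = fun p : ℝ × ℝ => β * ((p.1 - a) * (p.1 - a) + (p.2 - b) * (p.2 - b)) := by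
      funext p
      unfold bar
      ring
    rw [hb]
    exact h3
  have : (β • ((q.1 - a) • ContinuousLinearMap.fst ℝ ℝ ℝ + (q.1 - a) • ContinuousLinearMap.fst ℝ ℝ ℝ
        + ((q.2 - b) • ContinuousLinearMap.snd ℝ ℝ ℝ + (q.2 - b) • ContinuousLinearMap.snd ℝ ℝ ℝ)))
      = barD β a b q := by
    apply ContinuousLinearMap.ext
    intro w
    simp [barD]
    ring
  rw [this] at he
  exact he

lemma barD_hasFDeriv (β a b : ℝ) (p : ℝ × ℝ) : HasFDerivAt (barD β a b) (barH β) p := by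
  have h1 : HasFDerivAt (fun q : ℝ × ℝ => 2*β*(q.1-a)) ((2*β) • ContinuousLinearMap.fst ℝ ℝ ℝ) p := by
    have := (hasFDerivAt_fst (𝕜 := ℝ) (p := p) (E := ℝ) (F := ℝ)).sub_const a |>.const_mul (2*β)
    simpa [smul_smul] using this
  have h2 : HasFDerivAt (fun q : ℝ × ℝ => 2*β*(q.2-b)) ((2*β) • ContinuousLinearMap.snd ℝ ℝ ℝ) p := by
    have := (hasFDerivAt_snd (𝕜 := ℝ) (p := p) (E := ℝ) (F := ℝ)).sub_const b |>.const_mul (2*β)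
    simpa [smul_smul] using this
  exact (h1.smul_const (ContinuousLinearMap.fst ℝ ℝ ℝ)).add
    (h2.smul_const (ContinuousLinearMap.snd ℝ ℝ ℝ))

lemma barH_apply (β : ℝ) (w w' : ℝ × ℝ) : barH β w w' = 2*β*(w.1*w'.1 + w.2*w'.2) := by
  simp [barH]
  ring

lemma barD_apply (β a b : ℝ) (q w : ℝ × ℝ) :
    barD β a b q w = 2*β*(q.1-a)*w.1 + 2*β*(q.2-b)*w.2 := by
  simp [barD]

set_option maxHeartbeats 1000000 in
lemma keymin {u : ℝ × ℝ → ℝ} {p : ℝ × ℝ} (β a b : ℝ) (hu : ContDiffAt ℝ 2 u p)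
    (hmin : IsLocalMin (fun q => u q - bar β a b q) p) :
    pdx u p = 2*β*(p.1-a) ∧ pdy u p = 2*β*(p.2-b) ∧
    2*β*(1 + (Wg u p)^2) / (Wg u p)^3 ≤ divW u p := by
  have hbarCD : ContDiffAt ℝ 2 (bar β a b) p := (bar_contDiff β a b).contDiffAt
  set w : ℝ × ℝ → ℝ := fun q => u q - bar β a b q with hwdef
  have hw : ContDiffAt ℝ 2 w p := hu.sub hbarCD
  have hud : DifferentiableAt ℝ u p := hu.differentiableAt two_ne_zero
  have hvd : DifferentiableAt ℝ (bar β a b) p := (bar_hasFDeriv β a b p).differentiableAt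
  -- gradient equality
  have hgrad : fderiv ℝ u p = barD β a b p := by
    have h0 : fderiv ℝ w p = 0 := hmin.fderiv_eq_zero
    have h1 : fderiv ℝ w p = fderiv ℝ u p - fderiv ℝ (bar β a b) p := fderiv_sub hud hvd
    have h2 : fderiv ℝ (bar β a b) p = barD β a b p := (bar_hasFDeriv β a b p).fderiv
    rw [h0, h2] at h1
    exact (sub_eq_zero.mp h1.symm)
  have hpdx : pdx u p = 2*β*(p.1-a) := by
    unfold pdx
    rw [hgrad, barD_apply]
    ring
  have hpdy : pdy u p = 2*β*(p.2-b) := by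
    unfold pdy
    rw [hgrad, barD_apply]
    ring
  -- Hessian inequality
  have hHw : fderiv ℝ (fderiv ℝ w) p = fderiv ℝ (fderiv ℝ u) p - barH β := by
    have heq : (fun q => fderiv ℝ w q) =ᶠ[𝓝 p] fun q => fderiv ℝ u q - barD β a b q := by
      filter_upwards [hu.eventually (by norm_num)] with q hq
      rw [hwdef]
      rw [fderiv_fun_sub (hq.differentiableAt two_ne_zero) (bar_hasFDeriv β a b q).differentiableAt,
        (bar_hasFDeriv β a b q).fderiv]
    rw [heq.fderiv_eq]
    rw [fderiv_fun_sub ((hu.fderiv_right (m := 1) (by norm_num)).differentiableAt one_ne_zero)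
      (barD_hasFDeriv β a b p).differentiableAt, (barD_hasFDeriv β a b p).fderiv]
  have hquad : ∀ e : ℝ × ℝ, 2*β*(e.1^2 + e.2^2) ≤ fderiv ℝ (fderiv ℝ u) p e e := by
    intro e
    have h0 := snd_deriv_nonneg_of_isLocalMin hw hmin e
    rw [hHw] at h0
    simp only [ContinuousLinearMap.sub_apply] at h0
    rw [barH_apply] at h0
    ring_nf at h0 ⊢
    linarith [h0]
  refine ⟨hpdx, hpdy, ?_⟩
  rw [divW_eq hu]
  set H := fderiv ℝ (fderiv ℝ u) p with hH
  have hsym := snd_symm hu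
  set A := pdx u p
  set B := pdy u p
  set e0 : ℝ × ℝ := (B, -A) with he0
  have hexp : e0 = B • ((1,0) : ℝ × ℝ) + (-A) • ((0,1) : ℝ × ℝ) := by
    simp [he0, Prod.ext_iff]
  have hE0 : H e0 e0 = B^2 * H (1,0) (1,0) - 2*A*B* H (1,0) (0,1) + A^2 * H (0,1) (0,1) := by
    rw [hexp]
    simp only [map_add, map_smul, ContinuousLinearMap.add_apply, ContinuousLinearMap.smul_apply,
      smul_eq_mul, map_neg, ContinuousLinearMap.neg_apply]
    rw [hsym (0,1) (1,0)]
    ring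
  have h1 := hquad ((1,0) : ℝ × ℝ)
  have h2 := hquad ((0,1) : ℝ × ℝ)
  have h3 := hquad e0
  rw [hE0] at h3
  have h3' : 2*β*(B^2 + A^2) ≤ B^2 * H (1,0) (1,0) - 2*A*B* H (1,0) (0,1)
      + A^2 * H (0,1) (0,1) := by
    have he1 : e0.1 = B := rfl
    have he2 : e0.2 = -A := rfl
    rw [he1, he2] at h3
    ring_nf at h3 ⊢
    linarith [h3]
  have h1' : 2*β ≤ H (1,0) (1,0) := by
    have hx1 : ((1,0) : ℝ × ℝ).1 = 1 := rfl
    have hx2 : ((1,0) : ℝ × ℝ).2 = 0 := rfl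
    rw [hx1, hx2] at h1
    norm_num at h1
    exact h1
  have h2' : 2*β ≤ H (0,1) (0,1) := by
    have hx1 : ((0,1) : ℝ × ℝ).1 = 0 := rfl
    have hx2 : ((0,1) : ℝ × ℝ).2 = 1 := rfl
    rw [hx1, hx2] at h2
    norm_num at h2
    exact h2
  have hW2 : (Wg u p)^2 = 1 + (A^2 + B^2) := by
    have := Wg_sq u p
    simpa [gradSq] using this
  have hW3 : 0 < (Wg u p)^3 := pow_pos (Wg_pos u p) 3
  have hnum : 2*β*(1 + (Wg u p)^2) ≤ (1 + B^2) * H (1,0) (1,0)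
      - 2*A*B* H (1,0) (0,1) + (1 + A^2) * H (0,1) (0,1) := by
    rw [hW2]
    ring_nf at h1' h2' h3' ⊢
    linarith [h1', h2', h3']
  rw [div_le_div_iff₀ hW3 hW3]
  exact mul_le_mul_of_nonneg_right hnum (le_of_lt hW3)

lemma keymax {u : ℝ × ℝ → ℝ} {p : ℝ × ℝ} (hu : ContDiffAt ℝ 2 u p)
    (hmax : IsLocalMax u p) : divW u p ≤ 0 ∧ Wg u p = 1 := by
  have hgrad : fderiv ℝ u p = 0 := hmax.fderiv_eq_zero
  have hpdx : pdx u p = 0 := by unfold pdx; rw [hgrad]; rfl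
  have hpdy : pdy u p = 0 := by unfold pdy; rw [hgrad]; rfl
  have hWg : Wg u p = 1 := by
    unfold Wg gradSq
    rw [hpdx, hpdy]
    simp
  refine ⟨?_, hWg⟩
  rw [divW_eq hu, hWg, hpdx, hpdy]
  have h1 := snd_deriv_nonpos_of_isLocalMax hu hmax ((1,0) : ℝ × ℝ)
  have h2 := snd_deriv_nonpos_of_isLocalMax hu hmax ((0,1) : ℝ × ℝ)
  nlinarith [h1, h2]

set_option maxHeartbeats 1600000 in
/-- Height estimates for solutions of the Dirichlet problem for the constant weighted
mean curvature equation on a bounded domain with `diam Ω < 1/μ`. -/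
theorem height_estimates_weighted (μ : ℝ) (hμ : 0 < μ) (Ω : Set (ℝ × ℝ))
    (hΩo : IsOpen Ω) (hΩc : IsConnected Ω) (hΩb : Bornology.IsBounded Ω)
    (hdiam : Metric.diam Ω < 1 / μ)
    (φ : ℝ × ℝ → ℝ) (hφ : ContinuousOn φ (frontier Ω)) :
    ∃ C₁ : ℝ, ∀ u : ℝ × ℝ → ℝ,
      ContDiffOn ℝ 2 u Ω → ContinuousOn u (closure Ω) →
      (∀ p ∈ Ω, divW u p = 1 / Wg u p + μ) →
      (∀ p ∈ frontier Ω, u p = φ p) →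
      ∀ p ∈ Ω, C₁ ≤ u p ∧ u p ≤ sSup (φ '' frontier Ω) := by
  have hne : Ω.Nonempty := hΩc.nonempty
  set d := Metric.diam Ω with hddef
  have hd0 : 0 ≤ d := Metric.diam_nonneg
  have hμd : μ * d < 1 := by
    have h := (lt_div_iff₀ hμ).mp hdiam
    linarith [h]
  -- coordinate projections
  set S := Prod.fst '' Ω with hSdef
  set T := Prod.snd '' Ω with hTdef
  have hSne : S.Nonempty := hne.image _
  have hTne : T.Nonempty := hne.image _
  obtain ⟨R, hR⟩ := (Metric.isBounded_iff_subset_closedBall (0 : ℝ × ℝ)).mp hΩb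
  have hfst_le : ∀ p q : ℝ × ℝ, dist p.1 q.1 ≤ dist p q := by
    intro p q; rw [Prod.dist_eq]; exact le_max_left _ _
  have hsnd_le : ∀ p q : ℝ × ℝ, dist p.2 q.2 ≤ dist p q := by
    intro p q; rw [Prod.dist_eq]; exact le_max_right _ _
  have habs1 : ∀ p : ℝ × ℝ, p ∈ Ω → |p.1| ≤ R ∧ |p.2| ≤ R := by
    intro p hp
    have h1 := hR hp
    rw [Metric.mem_closedBall] at h1
    have ha := hfst_le p 0
    have hb := hsnd_le p 0
    rw [Prod.fst_zero, Real.dist_eq, sub_zero] at ha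
    rw [Prod.snd_zero, Real.dist_eq, sub_zero] at hb
    exact ⟨ha.trans h1, hb.trans h1⟩
  have hSbddA : BddAbove S := by
    refine ⟨R, ?_⟩
    rintro x ⟨p, hp, rfl⟩
    exact le_trans (le_abs_self _) (habs1 p hp).1
  have hSbddB : BddBelow S := by
    refine ⟨-R, ?_⟩
    rintro x ⟨p, hp, rfl⟩
    linarith [neg_abs_le p.1, (habs1 p hp).1]
  have hTbddA : BddAbove T := by
    refine ⟨R, ?_⟩
    rintro x ⟨p, hp, rfl⟩
    exact le_trans (le_abs_self _) (habs1 p hp).2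
  have hTbddB : BddBelow T := by
    refine ⟨-R, ?_⟩
    rintro x ⟨p, hp, rfl⟩
    linarith [neg_abs_le p.2, (habs1 p hp).2]
  set a := (sInf S + sSup S)/2 with hadef
  set b := (sInf T + sSup T)/2 with hbdef
  have hSgap : sSup S ≤ sInf S + d := by
    apply csSup_le hSne
    rintro x ⟨p, hp, rfl⟩
    have hlow : p.1 - d ≤ sInf S := by
      apply le_csInf hSne
      rintro y ⟨q, hq, rfl⟩
      have h1 : dist p.1 q.1 ≤ d := le_trans (hfst_le p q) (Metric.dist_le_diam_of_mem hΩb hp hq)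
      rw [Real.dist_eq] at h1
      have := le_abs_self (p.1 - q.1)
      linarith
    linarith
  have hTgap : sSup T ≤ sInf T + d := by
    apply csSup_le hTne
    rintro x ⟨p, hp, rfl⟩
    have hlow : p.2 - d ≤ sInf T := by
      apply le_csInf hTne
      rintro y ⟨q, hq, rfl⟩
      have h1 : dist p.2 q.2 ≤ d := le_trans (hsnd_le p q) (Metric.dist_le_diam_of_mem hΩb hp hq)
      rw [Real.dist_eq] at h1
      have := le_abs_self (p.2 - q.2)
      linarith
    linarith
  have hclbound : ∀ p ∈ closure Ω,
      (sInf S ≤ p.1 ∧ p.1 ≤ sSup S) ∧ (sInf T ≤ p.2 ∧ p.2 ≤ sSup T) := by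
    have hC : IsClosed {q : ℝ × ℝ | (sInf S ≤ q.1 ∧ q.1 ≤ sSup S) ∧ (sInf T ≤ q.2 ∧ q.2 ≤ sSup T)} := by
      apply IsClosed.inter
      · exact (isClosed_le continuous_const continuous_fst).inter
          (isClosed_le continuous_fst continuous_const)
      · exact (isClosed_le continuous_const continuous_snd).inter
          (isClosed_le continuous_snd continuous_const)
    have hsub : Ω ⊆ {q : ℝ × ℝ | (sInf S ≤ q.1 ∧ q.1 ≤ sSup S) ∧ (sInf T ≤ q.2 ∧ q.2 ≤ sSup T)} := by
      intro q hq
      exact ⟨⟨csInf_le hSbddB ⟨q, hq, rfl⟩, le_csSup hSbddA ⟨q, hq, rfl⟩⟩,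
        ⟨csInf_le hTbddB ⟨q, hq, rfl⟩, le_csSup hTbddA ⟨q, hq, rfl⟩⟩⟩
    intro p hp
    exact closure_minimal hsub hC hp
  have htau : ∀ p ∈ closure Ω, (p.1 - a)^2 + (p.2 - b)^2 ≤ d^2/2 := by
    intro p hp
    obtain ⟨⟨h1, h2⟩, h3, h4⟩ := hclbound p hp
    have hx : (p.1 - a)^2 ≤ d^2/4 := by
      rw [hadef]
      nlinarith [hSgap, h1, h2]
    have hy : (p.2 - b)^2 ≤ d^2/4 := by
      rw [hbdef]
      nlinarith [hTgap, h3, h4]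
    linarith
  clear_value d S T a b
  -- compactness facts
  have hKc : IsCompact (closure Ω) := hΩb.isCompact_closure
  have hclne : (closure Ω).Nonempty := hne.closure
  have hFsub : frontier Ω ⊆ closure Ω := frontier_subset_closure
  have hFc : IsCompact (frontier Ω) := hKc.of_isClosed_subset isClosed_frontier hFsub
  have hFne : (frontier Ω).Nonempty := by
    rw [nonempty_frontier_iff]
    refine ⟨hne, ?_⟩
    intro hU
    have : ((R+1, 0) : ℝ × ℝ) ∈ Ω := by rw [hU]; trivial
    have h1 := hR this
    rw [Metric.mem_closedBall] at h1
    have h2 := hfst_le ((R+1, 0) : ℝ × ℝ) 0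
    simp only [Prod.fst_zero] at h2
    have h3 : dist (R+1 : ℝ) 0 ≤ R := le_trans h2 h1
    rw [Real.dist_0_eq_abs] at h3
    have := le_abs_self (R+1)
    linarith
  have himgc : IsCompact (φ '' frontier Ω) := hFc.image_of_continuousOn hφ
  have himgne : (φ '' frontier Ω).Nonempty := hFne.image _
  set m := sInf (φ '' frontier Ω) with hmdef
  set β := μ + 2 with hβdef
  have hβpos : 0 < β := by rw [hβdef]; linarith
  clear_value m β
  refine ⟨m - β * d^2, ?_⟩
  intro u hu2 huc hPDE hbc p hp
  have hCDat : ∀ q ∈ Ω, ContDiffAt ℝ 2 u q := fun q hq => hu2.contDiffAt (hΩo.mem_nhds hq)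
  constructor
  · -- lower bound
    have hvcont : Continuous (bar β a b) := (bar_contDiff β a b).continuous
    obtain ⟨p₂, hp₂, hmin⟩ := hKc.exists_isMinOn hclne (huc.sub hvcont.continuousOn)
    have hp₂F : p₂ ∈ frontier Ω := by
      have hp₂' := (closure_eq_self_union_frontier Ω ▸ hp₂)
      rcases hp₂' with h | h
      · exfalso
        have hnhds : closure Ω ∈ 𝓝 p₂ := Filter.mem_of_superset (hΩo.mem_nhds h) subset_closure
        have hloc : IsLocalMin (fun q => u q - bar β a b q) p₂ := hmin.isLocalMin hnhds
        obtain ⟨hx, hy, hkey⟩ := keymin β a b (hCDat p₂ h) hloc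
        have hPDE2 := hPDE p₂ h
        set W := Wg u p₂ with hWdef
        have hW1 : 1 ≤ W := one_le_Wg u p₂
        have hWpos : 0 < W := lt_of_lt_of_le one_pos hW1
        set τ := (p₂.1 - a)^2 + (p₂.2 - b)^2 with hτdef
        have hτd : τ ≤ d^2/2 := htau p₂ (subset_closure h)
        have hτ0 : 0 ≤ τ := by positivity
        have hτcl : τ = (p₂.1 - a)^2 + (p₂.2 - b)^2 := hτdef
        clear_value W τ
        have hW2 : W^2 = 1 + 4*β^2*τ := by
          rw [hWdef, Wg_sq]
          unfold gradSq
          rw [hx, hy, hτdef]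
          ring
        have hμW : μ * W ≤ 2*β - 1 := by
          have h30 : 0 ≤ μ * d := mul_nonneg hμ.le hd0
          have h3 : μ^2 * d^2 ≤ 1 := by nlinarith [mul_le_mul hμd.le hμd.le h30 zero_le_one]
          have hsq : (μ*W)^2 ≤ (2*β - 1)^2 := by
            have h1 : (μ*W)^2 = μ^2 + 4*β^2*(μ^2*τ) := by rw [mul_pow, hW2]; ring
            have hA : 4*β^2*(μ^2*τ) ≤ 4*β^2*(μ^2*(d^2/2)) := by
              apply mul_le_mul_of_nonneg_left _ (by positivity : (0:ℝ) ≤ 4*β^2)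
              exact mul_le_mul_of_nonneg_left hτd (sq_nonneg μ)
            have hB : 4*β^2*(μ^2*(d^2/2)) = 2*β^2*(μ^2*d^2) := by ring
            have hCC : 2*β^2*(μ^2*d^2) ≤ 2*β^2 := by
              have := mul_le_mul_of_nonneg_left h3 (by positivity : (0:ℝ) ≤ 2*β^2)
              linarith [this]
            have hmain : (μ*W)^2 ≤ μ^2 + 2*β^2 := by linarith [h1.le, hA, hB.le, hCC]
            have hfin : μ^2 + 2*β^2 ≤ (2*β - 1)^2 := by
              rw [hβdef]
              nlinarith [hμ.le, sq_nonneg μ]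
            linarith
          have h2β : 0 < 2*β - 1 := by rw [hβdef]; linarith
          nlinarith [hsq, h2β, mul_nonneg hμ.le hWpos.le]
        rw [hPDE2] at hkey
        have hWval : (1/W + μ) * W^3 = W^2 + μ * W^3 := by
          field_simp
        have hkey2 : 2*β*(1 + W^2) ≤ W^2 + μ * W^3 := by
          rw [div_le_iff₀ (pow_pos hWpos 3)] at hkey
          linarith [hkey, hWval.symm.le, hWval.le]
        have hcube : μ * W^3 ≤ (2*β - 1) * W^2 := by
          have := mul_le_mul_of_nonneg_right hμW (sq_nonneg W)
          calc μ * W^3 = (μ * W) * W^2 := by ring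
          _ ≤ (2*β - 1) * W^2 := this
        linarith [hkey2, hcube, hβpos]
      · exact h
    have hvp₂ : bar β a b p₂ ≤ β * (d^2/2) := by
      unfold bar
      apply mul_le_mul_of_nonneg_left (htau p₂ (hFsub hp₂F)) hβpos.le
    have hφm : m ≤ φ p₂ := by
      rw [hmdef]
      exact csInf_le himgc.bddBelow (mem_image_of_mem φ hp₂F)
    have hmin2 : u p₂ - bar β a b p₂ ≤ u p - bar β a b p := hmin (subset_closure hp)
    have hbar0 : 0 ≤ bar β a b p := by
      unfold bar
      positivity
    have hby : u p₂ = φ p₂ := hbc p₂ hp₂F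
    have : m - β * (d^2/2) ≤ u p := by
      have := hmin2
      rw [hby] at this
      linarith [hφm, hvp₂, hbar0, this]
    have hhalf : β * (d^2/2) ≤ β * d^2 := by nlinarith [hβpos.le, sq_nonneg d]
    linarith
  · -- upper bound
    obtain ⟨p₁, hp₁, hmax⟩ := hKc.exists_isMaxOn hclne huc
    have hp₁F : p₁ ∈ frontier Ω := by
      have hp₁' := (closure_eq_self_union_frontier Ω ▸ hp₁)
      rcases hp₁' with h | h
      · exfalso
        have hnhds : closure Ω ∈ 𝓝 p₁ := Filter.mem_of_superset (hΩo.mem_nhds h) subset_closure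
        have hloc : IsLocalMax u p₁ := hmax.isLocalMax hnhds
        obtain ⟨hdiv, hWg1⟩ := keymax (hCDat p₁ h) hloc
        have hPDE1 := hPDE p₁ h
        rw [hWg1] at hPDE1
        rw [hPDE1] at hdiv
        linarith
      · exact h
    calc u p ≤ u p₁ := hmax (subset_closure hp)
    _ = φ p₁ := hbc p₁ hp₁F
    _ ≤ sSup (φ '' frontier Ω) := le_csSup himgc.bddAbove (mem_image_of_mem φ hp₁F)
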